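/- arXiv:2407.16683 — 2 statements merged into one kernel-verified Lean document; each statement's English description precedes it below -/
import Mathlib

section
/- For every Gödel set V, the following sentences are 1-satisfiable in G_V if and only if they are classically satisfiable: (i) every quantifier-free sentence; (ii) every sentence, provided 0 is isolated in V; (iii) every prenex sentence; (iv) every purely existential sentence (a prenex sentence all of whose quantifiers are existential). -/
namespace GodelPaper

/-- A first-order language: function and relation symbols of each arity. -/
structure Lang where
  Func : ℕ → Type
  Rel : ℕ → Type

/-- A Gödel set: a closed subset of [0,1] containing 0 and 1. -/
def GodelSet (V : Set ℝ) : Prop :=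
  IsClosed V ∧ V ⊆ Set.Icc 0 1 ∧ (0:ℝ) ∈ V ∧ (1:ℝ) ∈ V

/-- Terms with variables from `α`. -/
inductive Term (L : Lang) (α : Type) : Type
  | var : α → Term L α
  | func : ∀ {k}, L.Func k → (Fin k → Term L α) → Term L α

/-- A `V`-interpretation: nonempty domain, interpretation of function symbols,
and truth values in `V` for atomic sentences with parameters. -/
structure Interp (L : Lang) (V : Set ℝ) where
  Dom : Type
  dom_nonempty : Nonempty Dom
  funMap : ∀ {k}, L.Func k → (Fin k → Dom) → Dom
  relVal : ∀ {k}, L.Rel k → (Fin k → Dom) → ℝ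
  relVal_mem : ∀ {k} (R : L.Rel k) (v : Fin k → Dom), relVal R v ∈ V

def Term.eval {L : Lang} {V : Set ℝ} (I : Interp L V) {α : Type} (v : α → I.Dom) :
    Term L α → I.Dom
  | .var i => v i
  | .func f ts => I.funMap f fun j => Term.eval I v (ts j)

/-- Formulas of the Δ-extended language, with free variables among `Fin n`.
The quantifiers bind the *last* variable. Δ-free formulas (i.e. formulas of the
plain language) are singled out by the predicate `DeltaFree` below. -/
inductive Form (L : Lang) : ℕ → Type
  | falsum : ∀ {n}, Form L n
  | atom : ∀ {n k}, L.Rel k → (Fin k → Term L (Fin n)) → Form L n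
  | conj : ∀ {n}, Form L n → Form L n → Form L n
  | disj : ∀ {n}, Form L n → Form L n → Form L n
  | impl : ∀ {n}, Form L n → Form L n → Form L n
  | delta : ∀ {n}, Form L n → Form L n
  | all : ∀ {n}, Form L (n+1) → Form L n
  | ex : ∀ {n}, Form L (n+1) → Form L n

/-- The Gödel truth value of a formula under an interpretation and an
assignment of the free variables. -/
noncomputable def Form.val {L : Lang} {V : Set ℝ} (I : Interp L V) :
    ∀ {n}, Form L n → (Fin n → I.Dom) → ℝ
  | _, .falsum, _ => 0
  | _, .atom R ts, ρ => I.relVal R fun j => Term.eval I ρ (ts j)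
  | _, .conj A B, ρ => min (Form.val I A ρ) (Form.val I B ρ)
  | _, .disj A B, ρ => max (Form.val I A ρ) (Form.val I B ρ)
  | _, .impl A B, ρ => if Form.val I A ρ ≤ Form.val I B ρ then 1 else Form.val I B ρ
  | _, .delta A, ρ => if Form.val I A ρ = 1 then 1 else 0
  | _, .all A, ρ => sInf {v : ℝ | ∃ d : I.Dom, v = Form.val I A (Fin.snoc ρ d)}
  | _, .ex A, ρ => sSup {v : ℝ | ∃ d : I.Dom, v = Form.val I A (Fin.snoc ρ d)}

/-- The value of a sentence. -/
noncomputable def Form.sval {L : Lang} {V : Set ℝ} (I : Interp L V) (A : Form L 0) : ℝ :=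
  Form.val I A Fin.elim0

/-- `A` is valid in `G_V`. -/
def Valid {L : Lang} (V : Set ℝ) (A : Form L 0) : Prop :=
  ∀ I : Interp L V, Form.sval I A = 1

/-- `A` is 1-satisfiable in `G_V`. -/
def OneSat {L : Lang} (V : Set ℝ) (A : Form L 0) : Prop :=
  ∃ I : Interp L V, Form.sval I A = 1

/-- `A` is classically satisfiable: it takes value 1 under a `V`-interpretation
assigning only values in {0,1} to atomic sentences. -/
def ClassSat {L : Lang} (V : Set ℝ) (A : Form L 0) : Prop :=
  ∃ I : Interp L V,
    (∀ {k : ℕ} (R : L.Rel k) (v : Fin k → I.Dom), I.relVal R v = 0 ∨ I.relVal R v = 1) ∧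
    Form.sval I A = 1

/-- ¬A abbreviates A ⊃ ⊥. -/
def Form.not {L : Lang} {n : ℕ} (A : Form L n) : Form L n := Form.impl A Form.falsum

/-- A ↔ B abbreviates (A ⊃ B) ∧ (B ⊃ A). -/
def Form.iff {L : Lang} {n : ℕ} (A B : Form L n) : Form L n :=
  Form.conj (Form.impl A B) (Form.impl B A)

/-- Formulas of the plain language (no Δ). -/
def DeltaFree {L : Lang} : ∀ {n}, Form L n → Prop
  | _, .falsum => True
  | _, .atom _ _ => True
  | _, .conj A B => DeltaFree A ∧ DeltaFree B
  | _, .disj A B => DeltaFree A ∧ DeltaFree B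
  | _, .impl A B => DeltaFree A ∧ DeltaFree B
  | _, .delta _ => False
  | _, .all A => DeltaFree A
  | _, .ex A => DeltaFree A

/-- Quantifier-free formulas. -/
def QuantFree {L : Lang} : ∀ {n}, Form L n → Prop
  | _, .falsum => True
  | _, .atom _ _ => True
  | _, .conj A B => QuantFree A ∧ QuantFree B
  | _, .disj A B => QuantFree A ∧ QuantFree B
  | _, .impl A B => QuantFree A ∧ QuantFree B
  | _, .delta A => QuantFree A
  | _, .all _ => False
  | _, .ex _ => False

/-- Formulas containing no universal quantifier. -/
def AllFree {L : Lang} : ∀ {n}, Form L n → Prop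
  | _, .falsum => True
  | _, .atom _ _ => True
  | _, .conj A B => AllFree A ∧ AllFree B
  | _, .disj A B => AllFree A ∧ AllFree B
  | _, .impl A B => AllFree A ∧ AllFree B
  | _, .delta A => AllFree A
  | _, .all _ => False
  | _, .ex A => AllFree A

/-- Prenex formulas: a block of quantifiers followed by a quantifier-free matrix. -/
inductive IsPrenex {L : Lang} : ∀ {n}, Form L n → Prop
  | qf {n} {A : Form L n} : QuantFree A → IsPrenex A
  | all {n} {A : Form L (n+1)} : IsPrenex A → IsPrenex (Form.all A)
  | ex {n} {A : Form L (n+1)} : IsPrenex A → IsPrenex (Form.ex A)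

/-- Purely existential prenex formulas. -/
inductive ExPrenex {L : Lang} : ∀ {n}, Form L n → Prop
  | qf {n} {A : Form L n} : QuantFree A → ExPrenex A
  | ex {n} {A : Form L (n+1)} : ExPrenex A → ExPrenex (Form.ex A)

/-- The glued interpretation `I_ω`: atoms with value ≤ ω keep their value,
all other atoms get value 1. Same domain and function interpretations. -/
noncomputable def Interp.glue {L : Lang} {V : Set ℝ} (I : Interp L V) (ω : ℝ)
    (h1 : (1:ℝ) ∈ V) : Interp L V where
  Dom := I.Dom
  dom_nonempty := I.dom_nonempty
  funMap := fun {k} f v => I.funMap f v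
  relVal := fun {k} R v => if I.relVal R v ≤ ω then I.relVal R v else 1
  relVal_mem := fun {k} R v => by
    by_cases h : I.relVal R v ≤ ω
    · simpa [h] using I.relVal_mem R v
    · simpa [h] using h1

/-- The Gödel set `V_↑ = {1 - 1/k : k ≥ 1} ∪ {1}`. -/
def Vup : Set ℝ := {x : ℝ | ∃ k : ℕ, 1 ≤ k ∧ x = 1 - 1/(k:ℝ)} ∪ {1}

/-- The `m`-element Gödel set `V_m = {1 - 1/k : 1 ≤ k ≤ m-1} ∪ {1}`. -/
def Vfin (m : ℕ) : Set ℝ :=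
  {x : ℝ | ∃ k : ℕ, 1 ≤ k ∧ k ≤ m - 1 ∧ x = 1 - 1/(k:ℝ)} ∪ {1}

/-- Atomic formula built from a unary predicate. -/
def atom1 {L : Lang} (P : L.Rel 1) {n : ℕ} (t : Term L (Fin n)) : Form L n :=
  Form.atom P fun _ => t

/-- Atomic formula built from a 0-ary predicate (propositional atom). -/
def atom0 {L : Lang} (X : L.Rel 0) {n : ℕ} : Form L n :=
  Form.atom X fun i => i.elim0

def Term.rename {L : Lang} {α β : Type} (f : α → β) : Term L α → Term L β
  | .var i => .var (f i)
  | .func g ts => .func g fun j => Term.rename f (ts j)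

def Form.rename {L : Lang} : ∀ {m n}, (Fin m → Fin n) → Form L m → Form L n
  | _, _, _, .falsum => .falsum
  | _, _, f, .atom R ts => .atom R fun j => (ts j).rename f
  | _, _, f, .conj A B => .conj (A.rename f) (B.rename f)
  | _, _, f, .disj A B => .disj (A.rename f) (B.rename f)
  | _, _, f, .impl A B => .impl (A.rename f) (B.rename f)
  | _, _, f, .delta A => .delta (A.rename f)
  | _, _, f, .all A =>
      .all (A.rename (Fin.lastCases (Fin.last _) fun i => Fin.castSucc (f i)))
  | _, _, f, .ex A =>
      .ex (A.rename (Fin.lastCases (Fin.last _) fun i => Fin.castSucc (f i)))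

/-- Weakening: regard a formula with `n` free variables as one with `n+1`
free variables (not using the new last variable). -/
def Form.lift {L : Lang} {n : ℕ} (A : Form L n) : Form L (n+1) :=
  A.rename Fin.castSucc

def Term.subst {L : Lang} {α β : Type} (σ : α → Term L β) : Term L α → Term L β
  | .var i => σ i
  | .func g ts => .func g fun j => Term.subst σ (ts j)

def Form.subst {L : Lang} : ∀ {m n}, (Fin m → Term L (Fin n)) → Form L m → Form L n
  | _, _, _, .falsum => .falsum
  | _, _, σ, .atom R ts => .atom R fun j => (ts j).subst σ
  | _, _, σ, .conj A B => .conj (A.subst σ) (B.subst σ)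
  | _, _, σ, .disj A B => .disj (A.subst σ) (B.subst σ)
  | _, _, σ, .impl A B => .impl (A.subst σ) (B.subst σ)
  | _, _, σ, .delta A => .delta (A.subst σ)
  | _, _, σ, .all A =>
      .all (A.subst (Fin.lastCases (.var (Fin.last _))
        fun i => (σ i).rename Fin.castSucc))
  | _, _, σ, .ex A =>
      .ex (A.subst (Fin.lastCases (.var (Fin.last _))
        fun i => (σ i).rename Fin.castSucc))

/-- The language `L ∪ {f}` with one new function symbol of arity `a`. -/
def Lang.addFunc (L : Lang) (a : ℕ) : Lang where
  Func := fun k => L.Func k ⊕ PLift (k = a)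
  Rel := L.Rel

/-- The new function symbol of `L.addFunc a`. -/
def newFunc (L : Lang) (a : ℕ) : (L.addFunc a).Func a := Sum.inr ⟨rfl⟩

def Term.emb {L : Lang} {a : ℕ} {α : Type} : Term L α → Term (L.addFunc a) α
  | .var i => .var i
  | .func g ts => .func (Sum.inl g) fun j => Term.emb (ts j)

/-- Embedding of `L`-formulas into the language with the extra function symbol. -/
def Form.emb {L : Lang} {a : ℕ} : ∀ {n}, Form L n → Form (L.addFunc a) n
  | _, .falsum => .falsum
  | _, .atom R ts => .atom R fun j => (ts j).emb
  | _, .conj A B => .conj A.emb B.emb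
  | _, .disj A B => .disj A.emb B.emb
  | _, .impl A B => .impl A.emb B.emb
  | _, .delta A => .delta A.emb
  | _, .all A => .all A.emb
  | _, .ex A => .ex A.emb

/-- Prefix of `n` existential quantifiers (outermost quantifier binds variable 0). -/
def Form.exN {L : Lang} : ∀ n, Form L n → Form L 0
  | 0, A => A
  | n+1, A => Form.exN n (Form.ex A)

/-- Prefix of `n` universal quantifiers (outermost quantifier binds variable 0). -/
def Form.allN {L : Lang} : ∀ n, Form L n → Form L 0
  | 0, A => A
  | n+1, A => Form.allN n (Form.all A)

section Aux

variable {L : Lang} {V : Set ℝ}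

lemma eval_glue (I : Interp L V) (ω : ℝ) (h1 : (1:ℝ) ∈ V) {α : Type} (v : α → I.Dom) :
    ∀ t : Term L α, Term.eval (I.glue ω h1) v t = Term.eval I v t
  | .var _ => rfl
  | .func f ts => by
      show I.funMap f _ = I.funMap f _
      congr 1
      funext j
      exact eval_glue I ω h1 v (ts j)

/-- Values of Δ-free formulas lie in `V`. -/
lemma val_mem (hV : GodelSet V) (I : Interp L V) :
    ∀ {n} (B : Form L n), DeltaFree B → ∀ ρ : Fin n → I.Dom, Form.val I B ρ ∈ V := by
  intro n B
  induction B with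
  | falsum => exact fun _ _ => hV.2.2.1
  | atom R ts => exact fun _ ρ => I.relVal_mem R _
  | conj A B ihA ihB =>
      intro h ρ
      rcases le_total (Form.val I A ρ) (Form.val I B ρ) with hle | hle
      · simpa [Form.val, min_eq_left hle] using ihA h.1 ρ
      · simpa [Form.val, min_eq_right hle] using ihB h.2 ρ
  | disj A B ihA ihB =>
      intro h ρ
      rcases le_total (Form.val I A ρ) (Form.val I B ρ) with hle | hle
      · simpa [Form.val, max_eq_right hle] using ihB h.2 ρ
      · simpa [Form.val, max_eq_left hle] using ihA h.1 ρ
  | impl A B ihA ihB =>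
      intro h ρ
      simp only [Form.val]
      split_ifs
      · exact hV.2.2.2
      · exact ihB h.2 ρ
  | delta A ih => exact fun h => h.elim
  | all A ih =>
      intro h ρ
      simp only [Form.val]
      set S : Set ℝ := {v : ℝ | ∃ d, v = Form.val I A (Fin.snoc ρ d)} with hS
      have hsub : S ⊆ V := by rintro v ⟨d, rfl⟩; exact ih h _
      have hne : S.Nonempty := by
        obtain ⟨d⟩ := I.dom_nonempty
        exact ⟨_, ⟨d, rfl⟩⟩
      have hbb : BddBelow S := ⟨0, fun v hv => (hV.2.1 (hsub hv)).1⟩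
      have hcl : closure S ⊆ V := hV.1.closure_eq ▸ closure_mono hsub
      exact hcl (csInf_mem_closure hne hbb)
  | ex A ih =>
      intro h ρ
      simp only [Form.val]
      set S : Set ℝ := {v : ℝ | ∃ d, v = Form.val I A (Fin.snoc ρ d)} with hS
      have hsub : S ⊆ V := by rintro v ⟨d, rfl⟩; exact ih h _
      have hne : S.Nonempty := by
        obtain ⟨d⟩ := I.dom_nonempty
        exact ⟨_, ⟨d, rfl⟩⟩
      have hba : BddAbove S := ⟨1, fun v hv => (hV.2.1 (hsub hv)).2⟩
      have hcl : closure S ⊆ V := hV.1.closure_eq ▸ closure_mono hsub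
      exact hcl (csSup_mem_closure hne hba)

lemma chi_min {a b : ℝ} (ha : 0 ≤ a) (hb : 0 ≤ b) :
    min (if a = 0 then (0:ℝ) else 1) (if b = 0 then (0:ℝ) else 1)
      = if min a b = 0 then 0 else 1 := by
  have hab : min a b = 0 ↔ (a = 0 ∨ b = 0) := by
    constructor
    · intro h
      rcases min_cases a b with ⟨h1, _⟩ | ⟨h1, _⟩
      · left; rw [← h1]; exact h
      · right; rw [← h1]; exact h
    · rintro (h | h) <;> simp [min_eq_iff] <;> [left; right] <;>
        constructor <;> first | assumption | linarith
  by_cases h : a = 0 <;> by_cases h' : b = 0 <;>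
    simp [h, h', hab, ha, hb]

lemma chi_max {a b : ℝ} (ha : 0 ≤ a) (hb : 0 ≤ b) :
    max (if a = 0 then (0:ℝ) else 1) (if b = 0 then (0:ℝ) else 1)
      = if max a b = 0 then 0 else 1 := by
  have hab : max a b = 0 ↔ (a = 0 ∧ b = 0) := by
    constructor
    · intro h
      constructor <;> [skip; skip] <;>
        first
        | exact le_antisymm (h ▸ le_max_left a b) ha
        | exact le_antisymm (h ▸ le_max_right a b) hb
    · rintro ⟨rfl, rfl⟩; simp
  by_cases h : a = 0 <;> by_cases h' : b = 0 <;>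
    simp [h, h', hab, ha, hb, le_antisymm_iff]

lemma chi_impl {a b : ℝ} (ha : 0 ≤ a) (hb : 0 ≤ b) :
    (if (if a = 0 then (0:ℝ) else 1) ≤ (if b = 0 then (0:ℝ) else 1) then (1:ℝ)
        else (if b = 0 then (0:ℝ) else 1))
      = if (if a ≤ b then (1:ℝ) else b) = 0 then 0 else 1 := by
  by_cases h : a = 0 <;> by_cases h' : b = 0
  · subst h; subst h'; norm_num
  · subst h; simp [h', hb]
  · subst h'
    have ha' : 0 < a := lt_of_le_of_ne ha (Ne.symm h)
    rw [if_neg h, if_pos rfl, if_neg (by norm_num : ¬ (1:ℝ) ≤ 0),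
      if_neg (not_le.mpr ha'), if_pos rfl]
  · have hb' : 0 < b := lt_of_le_of_ne hb (Ne.symm h')
    rw [if_neg h, if_neg h', if_pos le_rfl]
    by_cases hab : a ≤ b
    · rw [if_pos hab, if_neg (by norm_num : (1:ℝ) ≠ 0)]
    · rw [if_neg hab, if_neg h']

/-- The fundamental glueing lemma for quantifier-free formulas: under the
hypothesis that no value of `V` lies in `(0, ω]`, the glued interpretation
assigns value `0` or `1` according to whether the original value was `0`. -/
lemma glue_val_qf (hV : GodelSet V) (I : Interp L V) {ω : ℝ}
    (hω0 : 0 ≤ ω) (hv : ∀ v ∈ V, v ≤ ω → v = 0) :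
    ∀ {n} (B : Form L n), DeltaFree B → QuantFree B → ∀ ρ : Fin n → I.Dom,
      Form.val (I.glue ω hV.2.2.2) B ρ = if Form.val I B ρ = 0 then 0 else 1 := by
  intro n B
  induction B with
  | falsum => intro _ _ _; simp [Form.val]
  | atom R ts =>
      intro _ _ ρ
      simp only [Form.val]
      show (if I.relVal R (fun j => Term.eval (I.glue ω hV.2.2.2) ρ (ts j)) ≤ ω
            then I.relVal R (fun j => Term.eval (I.glue ω hV.2.2.2) ρ (ts j)) else 1)
          = if I.relVal R (fun j => Term.eval I ρ (ts j)) = 0 then (0:ℝ) else 1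
      simp only [eval_glue]
      have hrV : I.relVal R (fun j => Term.eval I ρ (ts j)) ∈ V := I.relVal_mem R _
      by_cases h : I.relVal R (fun j => Term.eval I ρ (ts j)) = 0
      · rw [h, if_pos hω0, if_pos rfl]
      · have hnle : ¬ I.relVal R (fun j => Term.eval I ρ (ts j)) ≤ ω :=
          fun hle => h (hv _ hrV hle)
        rw [if_neg hnle, if_neg h]
  | conj A B ihA ihB =>
      intro hd hq ρ
      simp only [Form.val, ihA hd.1 hq.1 ρ, ihB hd.2 hq.2 ρ]
      exact chi_min (hV.2.1 (val_mem hV I A hd.1 ρ)).1 (hV.2.1 (val_mem hV I B hd.2 ρ)).1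
  | disj A B ihA ihB =>
      intro hd hq ρ
      simp only [Form.val, ihA hd.1 hq.1 ρ, ihB hd.2 hq.2 ρ]
      exact chi_max (hV.2.1 (val_mem hV I A hd.1 ρ)).1 (hV.2.1 (val_mem hV I B hd.2 ρ)).1
  | impl A B ihA ihB =>
      intro hd hq ρ
      simp only [Form.val, ihA hd.1 hq.1 ρ, ihB hd.2 hq.2 ρ]
      exact chi_impl (hV.2.1 (val_mem hV I A hd.1 ρ)).1 (hV.2.1 (val_mem hV I B hd.2 ρ)).1
  | delta A ih => exact fun hd => hd.elim
  | all A ih => exact fun _ hq => hq.elim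
  | ex A ih => exact fun _ hq => hq.elim

/-- The glued interpretation at a suitable `ω` is classical. -/
lemma glue_classical (hV : GodelSet V) (I : Interp L V) {ω : ℝ}
    (hv : ∀ v ∈ V, v ≤ ω → v = 0) {k : ℕ} (R : L.Rel k)
    (v : Fin k → (I.glue ω hV.2.2.2).Dom) :
    (I.glue ω hV.2.2.2).relVal R v = 0 ∨ (I.glue ω hV.2.2.2).relVal R v = 1 := by
  show (if I.relVal R v ≤ ω then I.relVal R v else 1) = 0 ∨
    (if I.relVal R v ≤ ω then I.relVal R v else 1) = 1
  by_cases h : I.relVal R v ≤ ω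
  · left; rw [if_pos h]; exact hv _ (I.relVal_mem R v) h
  · right; rw [if_neg h]

/-- Glueing lemma for prenex formulas: a prenex formula of positive value gets
value `1` in the glued interpretation. -/
lemma glue_val_prenex (hV : GodelSet V) (I : Interp L V) {ω : ℝ}
    (hω0 : 0 ≤ ω) (hv : ∀ v ∈ V, v ≤ ω → v = 0) :
    ∀ {n} {B : Form L n}, IsPrenex B → DeltaFree B → ∀ ρ : Fin n → I.Dom,
      0 < Form.val I B ρ → Form.val (I.glue ω hV.2.2.2) B ρ = 1 := by
  intro n B hP
  induction hP with
  | qf hq =>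
      intro hd ρ hpos
      rw [glue_val_qf hV I hω0 hv _ hd hq ρ]
      simp [hpos.ne']
  | @all m A hP ih =>
      intro hd ρ hpos
      have hd' : DeltaFree A := hd
      simp only [Form.val] at hpos ⊢
      have hbb : BddBelow {v : ℝ | ∃ d, v = Form.val I A (Fin.snoc ρ d)} := by
        refine ⟨0, ?_⟩
        rintro v ⟨d, rfl⟩
        exact (hV.2.1 (val_mem hV I A hd' _)).1
      have hone : ∀ d, Form.val (I.glue ω hV.2.2.2) A (Fin.snoc ρ d) = 1 := by
        intro d
        exact ih hd' _ (lt_of_lt_of_le hpos (csInf_le hbb ⟨d, rfl⟩))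
      refine IsLeast.csInf_eq ⟨?_, ?_⟩
      · obtain ⟨d⟩ := I.dom_nonempty
        exact ⟨d, (hone d).symm⟩
      · rintro v ⟨d, rfl⟩
        rw [hone d]
  | @ex m A hP ih =>
      intro hd ρ hpos
      have hd' : DeltaFree A := hd
      simp only [Form.val] at hpos ⊢
      have hex : ∃ d, 0 < Form.val I A (Fin.snoc ρ d) := by
        by_contra h
        push_neg at h
        have hle : sSup {v : ℝ | ∃ d, v = Form.val I A (Fin.snoc ρ d)} ≤ 0 := by
          refine csSup_le ?_ ?_
          · obtain ⟨d⟩ := I.dom_nonempty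
            exact ⟨_, ⟨d, rfl⟩⟩
          · rintro v ⟨d, rfl⟩; exact h d
        linarith
      obtain ⟨d0, hd0⟩ := hex
      refine IsGreatest.csSup_eq ⟨⟨d0, (ih hd' _ hd0).symm⟩, ?_⟩
      rintro v ⟨d, rfl⟩
      exact (hV.2.1 (val_mem hV (I.glue ω hV.2.2.2) A hd' _)).2

/-- Glueing lemma for arbitrary Δ-free formulas when `0` is isolated in `V`. -/
lemma glue_val_iso (hV : GodelSet V) (I : Interp L V) {ω ε : ℝ}
    (hε : 0 < ε) (hiso : ∀ v ∈ V, v ≠ 0 → ε ≤ v) (hω0 : 0 ≤ ω) (hωε : ω < ε) :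
    ∀ {n} (B : Form L n), DeltaFree B → ∀ ρ : Fin n → I.Dom,
      Form.val (I.glue ω hV.2.2.2) B ρ = if Form.val I B ρ = 0 then 0 else 1 := by
  have hv : ∀ v ∈ V, v ≤ ω → v = 0 := by
    intro v hvV hle
    by_contra h
    exact absurd (le_trans (hiso v hvV h) hle) (not_le.mpr hωε)
  intro n B
  induction B with
  | falsum => intro _ ρ; simp [Form.val]
  | atom R ts =>
      intro hd ρ
      exact glue_val_qf hV I hω0 hv _ hd trivial ρ
  | conj A B ihA ihB =>
      intro hd ρ
      simp only [Form.val, ihA hd.1 ρ, ihB hd.2 ρ]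
      exact chi_min (hV.2.1 (val_mem hV I A hd.1 ρ)).1 (hV.2.1 (val_mem hV I B hd.2 ρ)).1
  | disj A B ihA ihB =>
      intro hd ρ
      simp only [Form.val, ihA hd.1 ρ, ihB hd.2 ρ]
      exact chi_max (hV.2.1 (val_mem hV I A hd.1 ρ)).1 (hV.2.1 (val_mem hV I B hd.2 ρ)).1
  | impl A B ihA ihB =>
      intro hd ρ
      simp only [Form.val, ihA hd.1 ρ, ihB hd.2 ρ]
      exact chi_impl (hV.2.1 (val_mem hV I A hd.1 ρ)).1 (hV.2.1 (val_mem hV I B hd.2 ρ)).1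
  | delta A ih => exact fun hd => hd.elim
  | all A ih =>
      intro hd ρ
      simp only [Form.val]
      have hnonneg : ∀ d, 0 ≤ Form.val I A (Fin.snoc ρ d) := fun d =>
        (hV.2.1 (val_mem hV I A hd _)).1
      by_cases h0 : ∃ d0, Form.val I A (Fin.snoc ρ d0) = 0
      · obtain ⟨d0, h0⟩ := h0
        have hinf : sInf {v : ℝ | ∃ d, v = Form.val I A (Fin.snoc ρ d)} = 0 := by
          refine IsLeast.csInf_eq ⟨⟨d0, h0.symm⟩, ?_⟩
          rintro v ⟨d, rfl⟩; exact hnonneg d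
        refine Eq.trans ?_ (if_pos hinf).symm
        refine IsLeast.csInf_eq ⟨⟨d0, ?_⟩, ?_⟩
        · refine Eq.trans ?_ (ih hd (Fin.snoc ρ d0)).symm; rw [h0]; simp
        · rintro v ⟨d, rfl⟩
          refine le_of_le_of_eq ?_ (ih hd (Fin.snoc ρ d)).symm
          split_ifs <;> norm_num
      · push_neg at h0
        have hεle : ∀ d, ε ≤ Form.val I A (Fin.snoc ρ d) := fun d =>
          hiso _ (val_mem hV I A hd _) (h0 d)
        obtain ⟨d⟩ := I.dom_nonempty
        have hne : Set.Nonempty {v : ℝ | ∃ d, v = Form.val I A (Fin.snoc ρ d)} :=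
          ⟨_, ⟨d, rfl⟩⟩
        have hinf : ε ≤ sInf {v : ℝ | ∃ d, v = Form.val I A (Fin.snoc ρ d)} :=
          le_csInf hne (by rintro v ⟨d, rfl⟩; exact hεle d)
        refine Eq.trans ?_ (if_neg (by linarith : sInf {v : ℝ | ∃ d, v = Form.val I A (Fin.snoc ρ d)} ≠ 0)).symm
        refine IsLeast.csInf_eq ⟨⟨d, ?_⟩, ?_⟩
        · refine Eq.trans ?_ (ih hd (Fin.snoc ρ d)).symm; rw [if_neg (h0 d)]
        · rintro v ⟨d', rfl⟩
          refine le_of_le_of_eq ?_ (ih hd (Fin.snoc ρ d')).symm; rw [if_neg (h0 d')]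
  | ex A ih =>
      intro hd ρ
      simp only [Form.val]
      have hnonneg : ∀ d, 0 ≤ Form.val I A (Fin.snoc ρ d) := fun d =>
        (hV.2.1 (val_mem hV I A hd _)).1
      by_cases h0 : ∀ d, Form.val I A (Fin.snoc ρ d) = 0
      · obtain ⟨d⟩ := I.dom_nonempty
        have hsup : sSup {v : ℝ | ∃ d, v = Form.val I A (Fin.snoc ρ d)} = 0 := by
          refine IsGreatest.csSup_eq ⟨⟨d, (h0 d).symm⟩, ?_⟩
          rintro v ⟨d', rfl⟩; rw [h0 d']
        refine Eq.trans ?_ (if_pos hsup).symm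
        refine IsGreatest.csSup_eq ⟨⟨d, ?_⟩, ?_⟩
        · refine Eq.trans ?_ (ih hd (Fin.snoc ρ d)).symm; rw [h0 d]; simp
        · rintro v ⟨d', rfl⟩
          refine le_of_eq_of_le (ih hd (Fin.snoc ρ d')) ?_; rw [h0 d']; simp
      · push_neg at h0
        obtain ⟨d0, hd0⟩ := h0
        have hba : BddAbove {v : ℝ | ∃ d, v = Form.val I A (Fin.snoc ρ d)} := by
          refine ⟨1, ?_⟩
          rintro v ⟨d, rfl⟩
          exact (hV.2.1 (val_mem hV I A hd _)).2
        have hsup : Form.val I A (Fin.snoc ρ d0)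
            ≤ sSup {v : ℝ | ∃ d, v = Form.val I A (Fin.snoc ρ d)} :=
          le_csSup hba ⟨d0, rfl⟩
        have hpos : 0 < Form.val I A (Fin.snoc ρ d0) :=
          lt_of_le_of_ne (hnonneg d0) (Ne.symm hd0)
        refine Eq.trans ?_ (if_neg (by linarith :
          sSup {v : ℝ | ∃ d, v = Form.val I A (Fin.snoc ρ d)} ≠ 0)).symm
        refine IsGreatest.csSup_eq ⟨⟨d0, ?_⟩, ?_⟩
        · refine Eq.trans ?_ (ih hd (Fin.snoc ρ d0)).symm; rw [if_neg hd0]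
        · rintro v ⟨d', rfl⟩
          refine le_of_eq_of_le (ih hd (Fin.snoc ρ d')) ?_
          split_ifs <;> norm_num

lemma exPrenex_isPrenex {n : ℕ} {B : Form L n} (h : ExPrenex B) : IsPrenex B := by
  induction h with
  | qf hq => exact IsPrenex.qf hq
  | ex _ ih => exact IsPrenex.ex ih

end Aux

/-- For every Gödel set `V`, 1-satisfiability coincides with
classical satisfiability for: (i) quantifier-free sentences; (ii) all
sentences, provided 0 is isolated in `V`; (iii) prenex sentences;
(iv) purely existential sentences. -/
theorem stmt_3 {L : Lang} {V : Set ℝ} (hV : GodelSet V) :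
    (∀ A : Form L 0, DeltaFree A → QuantFree A → (OneSat V A ↔ ClassSat V A)) ∧
    ((∃ ε > (0:ℝ), V ∩ Set.Ioo 0 ε = ∅) →
      ∀ A : Form L 0, DeltaFree A → (OneSat V A ↔ ClassSat V A)) ∧
    (∀ A : Form L 0, DeltaFree A → IsPrenex A → (OneSat V A ↔ ClassSat V A)) ∧
    (∀ A : Form L 0, DeltaFree A → ExPrenex A → (OneSat V A ↔ ClassSat V A)) := by
  have hv0 : ∀ v ∈ V, v ≤ (0:ℝ) → v = 0 := fun v hvV hle =>
    le_antisymm hle (hV.2.1 hvV).1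
  have prenex : ∀ A : Form L 0, DeltaFree A → IsPrenex A → (OneSat V A ↔ ClassSat V A) := by
    intro A hd hP
    constructor
    · rintro ⟨I, hI⟩
      refine ⟨I.glue 0 hV.2.2.2, fun {k} R v => glue_classical hV I hv0 R v, ?_⟩
      exact glue_val_prenex hV I le_rfl hv0 hP hd Fin.elim0 (by rw [Form.sval] at hI; rw [hI]; norm_num)
    · rintro ⟨I, _, hI⟩
      exact ⟨I, hI⟩
  refine ⟨?_, ?_, prenex, ?_⟩
  · intro A hd hq
    exact prenex A hd (IsPrenex.qf hq)
  · rintro ⟨ε, hε, hVε⟩ A hd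
    constructor
    · rintro ⟨I, hI⟩
      have hiso : ∀ v ∈ V, v ≠ 0 → ε ≤ v := by
        intro v hvV hne
        by_contra h
        push_neg at h
        have hv0' : 0 < v := lt_of_le_of_ne (hV.2.1 hvV).1 (Ne.symm hne)
        have : v ∈ V ∩ Set.Ioo 0 ε := ⟨hvV, hv0', h⟩
        rw [hVε] at this
        exact this
      set ω : ℝ := ε / 2 with hω
      have hω0 : 0 ≤ ω := by positivity
      have hωε : ω < ε := by linarith
      have hvω : ∀ v ∈ V, v ≤ ω → v = 0 := by
        intro v hvV hle
        by_contra h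
        exact absurd (le_trans (hiso v hvV h) hle) (not_le.mpr hωε)
      refine ⟨I.glue ω hV.2.2.2, fun {k} R v => glue_classical hV I hvω R v, ?_⟩
      rw [Form.sval]; refine (glue_val_iso hV I hε hiso hω0 hωε A hd Fin.elim0).trans ?_
      rw [Form.sval] at hI
      rw [hI]
      norm_num
    · rintro ⟨I, _, hI⟩
      exact ⟨I, hI⟩
  · intro A hd hq
    exact prenex A hd (exPrenex_isPrenex hq)

end GodelPaper
end

section
/- Let V be a Gödel set in which 0 is not isolated (V ∩ (0,ε) ≠ ∅ for every ε > 0), and let L contain a unary predicate A. Then the sentence F := ¬∀x A(x) ∧ ∀x ¬¬A(x) admits no >0-valid equivalent prenex form: there is no prenex L-sentence P such that ¬¬(F ↔ P) is valid in G_V. -/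
namespace GodelPaper

section Proof

variable {L : Lang} {V : Set ℝ}

/-- Collapse of an interpretation: atoms with positive value become 1, others 0. -/
noncomputable def Interp.collapse (I : Interp L V) (h0 : (0:ℝ) ∈ V) (h1 : (1:ℝ) ∈ V) :
    Interp L V where
  Dom := I.Dom
  dom_nonempty := I.dom_nonempty
  funMap := fun f v => I.funMap f v
  relVal := fun R v => if 0 < I.relVal R v then 1 else 0
  relVal_mem := fun R v => by split <;> assumption

lemma collapse_relVal (I : Interp L V) (h0 : (0:ℝ) ∈ V) (h1 : (1:ℝ) ∈ V) {k : ℕ}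
    (R : L.Rel k) (v : Fin k → I.Dom) :
    (I.collapse h0 h1).relVal R v = if 0 < I.relVal R v then 1 else 0 := rfl

lemma g_min (a b : ℝ) (ha : 0 ≤ a) (hb : 0 ≤ b) :
    min (if 0 < a then (1:ℝ) else 0) (if 0 < b then 1 else 0)
      = if 0 < min a b then 1 else 0 := by
  rcases ha.lt_or_eq with ha' | ha'
  · rcases hb.lt_or_eq with hb' | hb'
    · simp [ha', hb', lt_min_iff]
    · subst hb'
      simp [ha', lt_min_iff]
  · subst ha'
    have h1 : (0:ℝ) ≤ if 0 < b then (1:ℝ) else 0 := by split_ifs <;> norm_num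
    simp [lt_min_iff, min_eq_left h1]

lemma g_max (a b : ℝ) (ha : 0 ≤ a) (hb : 0 ≤ b) :
    max (if 0 < a then (1:ℝ) else 0) (if 0 < b then 1 else 0)
      = if 0 < max a b then 1 else 0 := by
  rcases ha.lt_or_eq with ha' | ha'
  · rcases hb.lt_or_eq with hb' | hb'
    · simp [ha', hb', lt_max_iff]
    · subst hb'
      simp [ha', lt_max_iff]
  · subst ha'
    rcases hb.lt_or_eq with hb' | hb'
    · simp [hb', lt_max_iff]
    · subst hb'
      simp

lemma g_impl (a b : ℝ) (ha : 0 ≤ a) (hb : 0 ≤ b) :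
    (if (if 0 < a then (1:ℝ) else 0) ≤ (if 0 < b then (1:ℝ) else 0) then (1:ℝ)
      else (if 0 < b then (1:ℝ) else 0))
      = if 0 < (if a ≤ b then (1:ℝ) else b) then (1:ℝ) else 0 := by
  rcases ha.lt_or_eq with ha' | ha'
  · rcases hb.lt_or_eq with hb' | hb'
    · have hab : (0:ℝ) < if a ≤ b then 1 else b := by
        split_ifs
        · norm_num
        · exact hb'
      simp [ha', hb', hab]
    · subst hb'
      have hab : ¬ a ≤ 0 := not_le.mpr ha'
      simp [ha', hab]
  · subst ha'
    have h1 : (0:ℝ) ≤ if 0 < b then (1:ℝ) else 0 := by split_ifs <;> norm_num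
    simp [h1, hb]

lemma eval_collapse (I : Interp L V) (h0 : (0:ℝ) ∈ V) (h1 : (1:ℝ) ∈ V) {α : Type}
    (v : α → I.Dom) (t : Term L α) :
    Term.eval (I.collapse h0 h1) v t = Term.eval I v t := by
  induction t with
  | var i => rfl
  | func f ts ih =>
      show I.funMap f _ = I.funMap f _
      congr 1
      funext j
      exact ih j

lemma val_mem_Icc (hV : V ⊆ Set.Icc 0 1) (I : Interp L V) :
    ∀ {n} (B : Form L n) (ρ : Fin n → I.Dom), Form.val I B ρ ∈ Set.Icc (0:ℝ) 1 := by
  intro n B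
  induction B with
  | falsum => intro ρ; exact ⟨le_rfl, zero_le_one⟩
  | atom R ts => intro ρ; exact hV (I.relVal_mem R _)
  | conj A B ihA ihB =>
      intro ρ
      exact ⟨le_min (ihA ρ).1 (ihB ρ).1, min_le_of_left_le (ihA ρ).2⟩
  | disj A B ihA ihB =>
      intro ρ
      exact ⟨le_max_of_le_left (ihA ρ).1, max_le (ihA ρ).2 (ihB ρ).2⟩
  | impl A B ihA ihB =>
      intro ρ
      show (if _ then _ else _) ∈ _
      split
      · exact ⟨zero_le_one, le_rfl⟩
      · exact ihB ρ
  | delta A ihA =>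
      intro ρ
      show (if _ then _ else _) ∈ _
      split
      · exact ⟨zero_le_one, le_rfl⟩
      · exact ⟨le_rfl, zero_le_one⟩
  | all A ihA =>
      intro ρ
      obtain ⟨d⟩ := I.dom_nonempty
      have hbd : BddBelow {v : ℝ | ∃ d : I.Dom, v = Form.val I A (Fin.snoc ρ d)} := by
        refine ⟨0, ?_⟩
        rintro v ⟨e, rfl⟩
        exact (ihA _).1
      constructor
      · refine le_csInf ⟨_, d, rfl⟩ ?_
        rintro v ⟨e, rfl⟩
        exact (ihA _).1
      · exact le_trans (csInf_le hbd ⟨d, rfl⟩) (ihA _).2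
  | ex A ihA =>
      intro ρ
      obtain ⟨d⟩ := I.dom_nonempty
      have hbd : BddAbove {v : ℝ | ∃ d : I.Dom, v = Form.val I A (Fin.snoc ρ d)} := by
        refine ⟨1, ?_⟩
        rintro v ⟨e, rfl⟩
        exact (ihA _).2
      constructor
      · exact le_trans (ihA _).1 (le_csSup hbd ⟨d, rfl⟩)
      · refine csSup_le ⟨_, d, rfl⟩ ?_
        rintro v ⟨e, rfl⟩
        exact (ihA _).2

lemma collapse_val01 (I : Interp L V) (h0 : (0:ℝ) ∈ V) (h1 : (1:ℝ) ∈ V) :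
    ∀ {n} (B : Form L n) (ρ : Fin n → I.Dom),
      Form.val (I.collapse h0 h1) B ρ = 0 ∨ Form.val (I.collapse h0 h1) B ρ = 1 := by
  intro n B
  induction B with
  | falsum => intro ρ; exact Or.inl rfl
  | atom R ts =>
      intro ρ
      simp only [Form.val, collapse_relVal]
      show (if 0 < I.relVal R _ then (1:ℝ) else 0) = 0 ∨ (if 0 < I.relVal R _ then (1:ℝ) else 0) = 1
      split
      · exact Or.inr rfl
      · exact Or.inl rfl
  | conj A B ihA ihB =>
      intro ρ
      show min _ _ = 0 ∨ min _ _ = 1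
      rcases ihA ρ with h | h <;> rcases ihB ρ with h' | h' <;> rw [h, h'] <;> norm_num
  | disj A B ihA ihB =>
      intro ρ
      show max _ _ = 0 ∨ max _ _ = 1
      rcases ihA ρ with h | h <;> rcases ihB ρ with h' | h' <;> rw [h, h'] <;> norm_num
  | impl A B ihA ihB =>
      intro ρ
      simp only [Form.val]
      split
      · exact Or.inr rfl
      · exact ihB ρ
  | delta A ihA =>
      intro ρ
      simp only [Form.val]
      split
      · exact Or.inr rfl
      · exact Or.inl rfl
  | all A ihA =>
      intro ρ
      show sInf _ = 0 ∨ sInf _ = 1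
      set S := {v : ℝ | ∃ d, v = Form.val (I.collapse h0 h1) A (Fin.snoc ρ d)} with hS
      obtain ⟨d⟩ := I.dom_nonempty
      have hlb : ∀ v ∈ S, (0:ℝ) ≤ v := by
        rintro v ⟨e, rfl⟩
        rcases ihA (Fin.snoc ρ e) with h | h <;> erw [h] <;> norm_num
      by_cases hz : ∃ e, Form.val (I.collapse h0 h1) A (Fin.snoc ρ e) = 0
      · obtain ⟨e, he⟩ := hz
        left
        refine le_antisymm ?_ (le_csInf ⟨_, d, rfl⟩ hlb)
        refine csInf_le ⟨0, hlb⟩ ?_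
        exact ⟨e, he.symm⟩
      · right
        push_neg at hz
        have hone : ∀ e, Form.val (I.collapse h0 h1) A (Fin.snoc ρ e) = 1 := by
          intro e
          rcases ihA (Fin.snoc ρ e) with h | h
          · exact absurd h (hz e)
          · exact h
        have : S = {1} := by
          ext v
          constructor
          · rintro ⟨e, rfl⟩; exact hone e
          · rintro rfl; exact ⟨d, (hone d).symm⟩
        rw [this, csInf_singleton]
  | ex A ihA =>
      intro ρ
      show sSup _ = 0 ∨ sSup _ = 1
      set S := {v : ℝ | ∃ d, v = Form.val (I.collapse h0 h1) A (Fin.snoc ρ d)} with hS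
      obtain ⟨d⟩ := I.dom_nonempty
      have hub : ∀ v ∈ S, v ≤ (1:ℝ) := by
        rintro v ⟨e, rfl⟩
        rcases ihA (Fin.snoc ρ e) with h | h <;> erw [h] <;> norm_num
      by_cases hz : ∃ e, Form.val (I.collapse h0 h1) A (Fin.snoc ρ e) = 1
      · obtain ⟨e, he⟩ := hz
        right
        refine le_antisymm (csSup_le ⟨_, d, rfl⟩ hub) ?_
        refine le_csSup ⟨1, hub⟩ ?_
        exact ⟨e, he.symm⟩
      · left
        push_neg at hz
        have hzero : ∀ e, Form.val (I.collapse h0 h1) A (Fin.snoc ρ e) = 0 := by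
          intro e
          rcases ihA (Fin.snoc ρ e) with h | h
          · exact h
          · exact absurd h (hz e)
        have : S = {0} := by
          ext v
          constructor
          · rintro ⟨e, rfl⟩; exact hzero e
          · rintro rfl; exact ⟨d, (hzero d).symm⟩
        rw [this, csSup_singleton]

lemma qf_collapse (hV : V ⊆ Set.Icc 0 1) (I : Interp L V) (h0 : (0:ℝ) ∈ V)
    (h1 : (1:ℝ) ∈ V) :
    ∀ {n} (B : Form L n), QuantFree B → DeltaFree B → ∀ (ρ : Fin n → I.Dom),
      Form.val (I.collapse h0 h1) B ρ = if 0 < Form.val I B ρ then 1 else 0 := by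
  intro n B
  induction B with
  | falsum => intro _ _ ρ; simp [Form.val]
  | atom R ts =>
      intro _ _ ρ
      simp only [Form.val, collapse_relVal, eval_collapse I h0 h1]
      rfl
  | conj A B ihA ihB =>
      intro hq hd ρ
      show min _ _ = _
      rw [ihA hq.1 hd.1 ρ, ihB hq.2 hd.2 ρ]
      exact g_min _ _ (val_mem_Icc hV I A ρ).1 (val_mem_Icc hV I B ρ).1
  | disj A B ihA ihB =>
      intro hq hd ρ
      show max _ _ = _
      rw [ihA hq.1 hd.1 ρ, ihB hq.2 hd.2 ρ]
      exact g_max _ _ (val_mem_Icc hV I A ρ).1 (val_mem_Icc hV I B ρ).1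
  | impl A B ihA ihB =>
      intro hq hd ρ
      show (if Form.val (I.collapse h0 h1) A ρ ≤ Form.val (I.collapse h0 h1) B ρ then (1:ℝ)
        else Form.val (I.collapse h0 h1) B ρ) = _
      rw [ihA hq.1 hd.1 ρ, ihB hq.2 hd.2 ρ]
      simp only [Form.val]
      exact g_impl _ _ (val_mem_Icc hV I A ρ).1 (val_mem_Icc hV I B ρ).1
  | delta A ihA => intro _ hd ρ; exact hd.elim
  | all A ihA => intro hq _ ρ; exact hq.elim
  | ex A ihA => intro hq _ ρ; exact hq.elim

lemma prenex_pos (hV : V ⊆ Set.Icc 0 1) (I : Interp L V) (h0 : (0:ℝ) ∈ V)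
    (h1 : (1:ℝ) ∈ V) {n} {B : Form L n} (hB : IsPrenex B) :
    DeltaFree B → ∀ (ρ : Fin n → I.Dom), 0 < Form.val I B ρ →
      0 < Form.val (I.collapse h0 h1) B ρ := by
  induction hB with
  | @qf m A hq =>
      intro hd ρ hpos
      rw [qf_collapse hV I h0 h1 _ hq hd ρ, if_pos hpos]
      norm_num
  | @all m A hA ih =>
      intro hd ρ hpos
      show (0:ℝ) < sInf _
      have hpos' : ∀ d, 0 < Form.val I A (Fin.snoc ρ d) := by
        intro d
        have hbd : BddBelow {v : ℝ | ∃ e : I.Dom, v = Form.val I A (Fin.snoc ρ e)} := by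
          refine ⟨0, ?_⟩
          rintro v ⟨e, rfl⟩
          exact (val_mem_Icc hV I _ _).1
        exact lt_of_lt_of_le hpos (csInf_le hbd ⟨d, rfl⟩)
      have hone : ∀ d, Form.val (I.collapse h0 h1) A (Fin.snoc ρ d) = 1 := by
        intro d
        rcases collapse_val01 I h0 h1 _ (Fin.snoc ρ d) with h | h
        · exact absurd (h ▸ ih hd (Fin.snoc ρ d) (hpos' d)) (lt_irrefl 0)
        · exact h
      obtain ⟨d⟩ := I.dom_nonempty
      have : {v : ℝ | ∃ e, v = Form.val (I.collapse h0 h1) A (Fin.snoc ρ e)} = {1} := by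
        ext v
        constructor
        · rintro ⟨e, rfl⟩; exact hone e
        · rintro rfl; exact ⟨d, (hone d).symm⟩
      rw [this, csInf_singleton]
      norm_num
  | @ex m A hA ih =>
      intro hd ρ hpos
      show (0:ℝ) < sSup _
      obtain ⟨d⟩ := I.dom_nonempty
      have hex : ∃ e, 0 < Form.val I A (Fin.snoc ρ e) := by
        by_contra hc
        push_neg at hc
        have : sSup {v : ℝ | ∃ e : I.Dom, v = Form.val I A (Fin.snoc ρ e)} ≤ 0 := by
          refine csSup_le ⟨_, d, rfl⟩ ?_
          rintro v ⟨e, rfl⟩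
          exact hc e
        exact absurd hpos (not_lt.mpr this)
      obtain ⟨e, he⟩ := hex
      have hbd : BddAbove {v : ℝ | ∃ e : I.Dom,
          v = Form.val (I.collapse h0 h1) A (Fin.snoc ρ e)} := by
        refine ⟨1, ?_⟩
        rintro v ⟨e', rfl⟩
        exact (val_mem_Icc hV (I.collapse h0 h1) _ _).2
      exact lt_of_lt_of_le (ih hd (Fin.snoc ρ e) he) (le_csSup hbd ⟨e, rfl⟩)

lemma val_conj (K : Interp L V) {n} (A B : Form L n) (ρ : Fin n → K.Dom) :
    Form.val K (Form.conj A B) ρ = min (Form.val K A ρ) (Form.val K B ρ) := rfl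

lemma val_impl (K : Interp L V) {n} (A B : Form L n) (ρ : Fin n → K.Dom) :
    Form.val K (Form.impl A B) ρ
      = if Form.val K A ρ ≤ Form.val K B ρ then 1 else Form.val K B ρ := rfl

lemma val_not (K : Interp L V) {n} (A : Form L n) (ρ : Fin n → K.Dom) :
    Form.val K (Form.not A) ρ = if Form.val K A ρ ≤ 0 then 1 else 0 := rfl

lemma val_all (K : Interp L V) {n} (A : Form L (n+1)) (ρ : Fin n → K.Dom) :
    Form.val K (Form.all A) ρ
      = sInf {v : ℝ | ∃ d : K.Dom, v = Form.val K A (Fin.snoc ρ d)} := rfl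

lemma valid_pos {K : Interp L V} {X : Form L 0}
    (h : Form.sval K (Form.not (Form.not X)) = 1) : 0 < Form.val K X Fin.elim0 := by
  by_contra hc
  push_neg at hc
  have h' : Form.sval K (Form.not (Form.not X)) = 0 := by
    show (if (if Form.val K X Fin.elim0 ≤ 0 then (1:ℝ) else 0) ≤ 0 then (1:ℝ) else 0) = 0
    rw [if_pos hc, if_neg (by norm_num)]
  rw [h'] at h
  norm_num at h

open Classical in
/-- The interpretation over `ℕ` sending `P(n)` to `a n` and all other atoms to 1. -/
noncomputable def descInterp (P : L.Rel 1) (a : ℕ → ℝ) (h1 : (1:ℝ) ∈ V)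
    (haV : ∀ n, a n ∈ V) : Interp L V where
  Dom := ℕ
  dom_nonempty := ⟨0⟩
  funMap := fun _ _ => 0
  relVal := fun {k} R v =>
    match k, R, v with
    | 1, R, v => if R = P then a (v 0) else 1
    | 0, _, _ => 1
    | _+2, _, _ => 1
  relVal_mem := by
    intro k R v
    match k, R, v with
    | 1, R, v =>
      dsimp only
      split
      · exact haV _
      · exact h1
    | 0, _, _ => exact h1
    | _+2, _, _ => exact h1

open Classical in
lemma descInterp_atom (P : L.Rel 1) (a : ℕ → ℝ) (h1 : (1:ℝ) ∈ V) (haV : ∀ n, a n ∈ V)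
    (ρ : Fin 1 → ℕ) :
    Form.val (descInterp P a h1 haV) (atom1 P (Term.var 0)) ρ = a (ρ 0) := by
  show (if P = P then a (ρ 0) else 1) = a (ρ 0)
  rw [if_pos rfl]

end Proof

/-- If 0 is not isolated in the Gödel set `V` and `L` contains a
unary predicate `P`, then `F = ¬∀x P(x) ∧ ∀x ¬¬P(x)` admits no >0-valid
equivalent prenex form: there is no prenex sentence `Q` such that `¬¬(F ↔ Q)`
is valid in `G_V`. -/
theorem stmt_7 {L : Lang} {V : Set ℝ} (hV : GodelSet V)
    (h0 : ∀ ε > (0:ℝ), (V ∩ Set.Ioo 0 ε).Nonempty) (P : L.Rel 1) :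
    ¬ ∃ Q : Form L 0, IsPrenex Q ∧ DeltaFree Q ∧
        Valid V (Form.not (Form.not (Form.iff
          (Form.conj (Form.not (Form.all (atom1 P (Term.var 0))))
            (Form.all (Form.not (Form.not (atom1 P (Term.var 0))))))
          Q))) := by
  rintro ⟨Q, hQpre, hQdf, hval⟩
  obtain ⟨hVc, hVsub, hV0, hV1⟩ := hV
  have hex : ∀ n : ℕ, ∃ x : ℝ, x ∈ V ∧ x ∈ Set.Ioo 0 (1/((n:ℝ)+1)) := by
    intro n
    obtain ⟨x, hx⟩ := h0 (1/((n:ℝ)+1)) (by positivity)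
    exact ⟨x, hx.1, hx.2⟩
  choose a haV haIoo using hex
  have ha0 : ∀ n, 0 < a n := fun n => (haIoo n).1
  have ha1 : ∀ n, a n < 1/((n:ℝ)+1) := fun n => (haIoo n).2
  set I := descInterp P a hV1 haV with hI
  set At : Form L 1 := atom1 P (Term.var 0) with hAt
  set F : Form L 0 := Form.conj (Form.not (Form.all At))
      (Form.all (Form.not (Form.not At))) with hF
  have hatom : ∀ ρ : Fin 1 → ℕ, Form.val I At ρ = a (ρ 0) :=
    descInterp_atom P a hV1 haV
  -- inf of the atom values is 0
  have hinf : Form.val I (Form.all At) Fin.elim0 = 0 := by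
    rw [val_all]
    have hset : {v : ℝ | ∃ d : I.Dom, v = Form.val I At (Fin.snoc Fin.elim0 d)}
        = {v : ℝ | ∃ d : ℕ, v = a d} := by
      ext v
      constructor
      · rintro ⟨d, rfl⟩
        exact ⟨(Fin.snoc Fin.elim0 d : Fin 1 → ℕ) 0, hatom _⟩
      · rintro ⟨d, rfl⟩
        refine ⟨d, ?_⟩
        exact (hatom (Fin.snoc Fin.elim0 d)).symm
    rw [hset]
    have hbd : BddBelow {v : ℝ | ∃ d : ℕ, v = a d} := by
      refine ⟨0, ?_⟩
      rintro v ⟨d, rfl⟩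
      exact (ha0 d).le
    refine le_antisymm ?_ (le_csInf ⟨a 0, 0, rfl⟩ ?_)
    · by_contra hc
      push_neg at hc
      obtain ⟨n, hn⟩ := exists_nat_one_div_lt hc
      have h2 := csInf_le hbd ⟨n, rfl⟩
      have h3 := ha1 n
      linarith
    · rintro v ⟨d, rfl⟩
      exact (ha0 d).le
  have h1st : Form.val I (Form.not (Form.all At)) Fin.elim0 = 1 := by
    rw [val_not, hinf, if_pos le_rfl]
  have hval_at : ∀ d : ℕ, Form.val I At (Fin.snoc Fin.elim0 d) = a d := by
    intro d
    exact hatom _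
  have hnn : ∀ d : ℕ, Form.val I (Form.not (Form.not At)) (Fin.snoc Fin.elim0 d) = 1 := by
    intro d
    rw [val_not, val_not, hval_at d, if_neg (not_le.mpr (ha0 d)), if_pos le_rfl]
  have h2nd : Form.val I (Form.all (Form.not (Form.not At))) Fin.elim0 = 1 := by
    rw [val_all]
    have hset : {v : ℝ | ∃ d : I.Dom,
        v = Form.val I (Form.not (Form.not At)) (Fin.snoc Fin.elim0 d)} = {1} := by
      ext v
      constructor
      · rintro ⟨d, rfl⟩
        exact hnn d
      · rintro rfl
        exact ⟨(0:ℕ), (hnn 0).symm⟩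
    rw [hset, csInf_singleton]
  have hIF : Form.val I F Fin.elim0 = 1 := by
    rw [hF, val_conj, h1st, h2nd, min_self]
  -- from validity at I : Q has positive value under I
  have h3 := valid_pos (hval I)
  rw [Form.iff, val_conj, lt_min_iff] at h3
  obtain ⟨hFQ, -⟩ := h3
  rw [val_impl, hIF] at hFQ
  have hIQ : 0 < Form.val I Q Fin.elim0 := by
    by_cases h : (1:ℝ) ≤ Form.val I Q Fin.elim0
    · linarith
    · rwa [if_neg h] at hFQ
  -- pass to the collapsed (classical) interpretation
  have hJQ : 0 < Form.val (I.collapse hV0 hV1) Q Fin.elim0 :=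
    prenex_pos hVsub I hV0 hV1 hQpre hQdf Fin.elim0 hIQ
  have hJatom : ∀ ρ : Fin 1 → ℕ, Form.val (I.collapse hV0 hV1) At ρ = 1 := by
    intro ρ
    rw [qf_collapse hVsub I hV0 hV1 At trivial trivial ρ, hatom ρ,
      if_pos (ha0 _)]
  have hJinf : Form.val (I.collapse hV0 hV1) (Form.all At) Fin.elim0 = 1 := by
    rw [val_all]
    have hset : {v : ℝ | ∃ d : (I.collapse hV0 hV1).Dom, v = Form.val (I.collapse hV0 hV1) At (Fin.snoc Fin.elim0 d)}
        = {1} := by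
      ext v
      constructor
      · rintro ⟨d, rfl⟩
        exact hJatom _
      · rintro rfl
        exact ⟨(0:ℕ), (hJatom _).symm⟩
    rw [hset, csInf_singleton]
  have hJ1st : Form.val (I.collapse hV0 hV1) (Form.not (Form.all At)) Fin.elim0 = 0 := by
    rw [val_not, hJinf, if_neg (by norm_num)]
  have hJF : Form.val (I.collapse hV0 hV1) F Fin.elim0 = 0 := by
    rw [hF, val_conj, hJ1st]
    exact min_eq_left (val_mem_Icc hVsub (I.collapse hV0 hV1) _ _).1
  -- contradiction with validity at J
  have h4 := valid_pos (hval (I.collapse hV0 hV1))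
  rw [Form.iff, val_conj, lt_min_iff] at h4
  obtain ⟨-, hQF⟩ := h4
  rw [val_impl, hJF, if_neg (not_le.mpr hJQ)] at hQF
  exact lt_irrefl 0 hQF


end GodelPaper
end
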